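/- Let F be a field and K ⊊ F an Aut(F)-invariant proper subfield. A subset of F ∪ {∞} is a K-chain containing ∞ if and only if it is a projective affine line, i.e. a set of the form (Ka + b) ∪ {∞} for some a,b ∈ F with a ≠ 0 (where F is regarded as a K-vector space). -/

import Mathlib

open scoped Classical

/-- The cross-ratio `[a,b;c,d]` on the projective line `F ∪ {∞}` (modelled as
`Option F`, with `none` playing the role of `∞`), with the usual conventions
at `∞`; junk value `0` when two or more of the arguments are `∞`. -/
noncomputable def crossRatio {F : Type*} [Field F] :
    Option F → Option F → Option F → Option F → F
  | none,   some b, some c, some d => (d - b) / (c - b)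
  | some a, none,   some c, some d => (c - a) / (d - a)
  | some a, some b, none,   some d => (d - b) / (d - a)
  | some a, some b, some c, none   => (c - a) / (c - b)
  | some a, some b, some c, some d => ((c - a) / (c - b)) * ((d - b) / (d - a))
  | _, _, _, _ => 0

/-- A permutation `f` of the projective line is `O`-preserving if for all
quadruples of distinct points, `[a,b;c,d] ∈ O ↔ [f a, f b; f c, f d] ∈ O`. -/
def OPreserving {F : Type*} [Field F] (O : Set F) (f : Equiv.Perm (Option F)) : Prop :=
  ∀ a b c d : Option F, a ≠ b → a ≠ c → a ≠ d → b ≠ c → b ≠ d → c ≠ d →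
    (crossRatio a b c d ∈ O ↔ crossRatio (f a) (f b) (f c) (f d) ∈ O)

/-- The map `x ↦ (a σ(x) + b)/(c σ(x) + d)` on the projective line `F ∪ {∞}`,
with the usual conventions at `∞`. -/
noncomputable def moebius {F : Type*} [Field F] (σ : F ≃+* F) (a b c d : F) :
    Option F → Option F
  | none => if c = 0 then none else some (a / c)
  | some x => if c * σ x + d = 0 then none else some ((a * σ x + b) / (c * σ x + d))

/-- `PΓL₂(F)`: the group of permutations of the projective line `F ∪ {∞}` of the
form `x ↦ (a σ(x) + b)/(c σ(x) + d)` with `ad - bc ≠ 0` and `σ ∈ Aut(F)`. -/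
def PGammaL2 (F : Type*) [Field F] : Set (Equiv.Perm (Option F)) :=
  {f | ∃ (σ : F ≃+* F) (a b c d : F), a * d - b * c ≠ 0 ∧
        ∀ x, f x = moebius σ a b c d x}

/-- A `K`-chain: the image of `K ∪ {∞}` under an element of `PΓL₂(F)`. -/
def IsKChain {F : Type*} [Field F] (K : Subfield F) (X : Set (Option F)) : Prop :=
  ∃ g ∈ PGammaL2 F, X = ⇑g '' (some '' (K : Set F) ∪ {none})

/-- For an `Aut(F)`-invariant proper subfield `K ⊊ F`, a subset of `F ∪ {∞}` is a
`K`-chain containing `∞` if and only if it is a projective affine line, i.e. of the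
form `(Ka + b) ∪ {∞}` with `a ≠ 0` (viewing `F` as a `K`-vector space). -/
theorem kChain_with_infty_iff_projective_affine_line {F : Type*} [Field F]
    (K : Subfield F) (hK : K ≠ ⊤)
    (hInv : ∀ σ : F ≃+* F, ∀ x ∈ K, σ x ∈ K)
    (X : Set (Option F)) :
    (IsKChain K X ∧ none ∈ X) ↔
      ∃ a b : F, a ≠ 0 ∧
        X = some '' ((fun k : F => k * a + b) '' (K : Set F)) ∪ {none} := by
  constructor
  · rintro ⟨⟨g, ⟨σ, a, b, c, d, hdet, hg⟩, rfl⟩, hinf⟩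
    have hσ : ∀ x, σ x ∈ K ↔ x ∈ K := fun x =>
      ⟨fun h => by simpa using hInv σ.symm _ h, hInv σ x⟩
    by_cases hc : c = 0
    · subst hc
      have ha : a ≠ 0 := by rintro rfl; simp at hdet
      have hd : d ≠ 0 := by rintro rfl; simp at hdet
      refine ⟨a / d, b / d, div_ne_zero ha hd, ?_⟩
      ext o
      constructor
      · rintro ⟨s, hs, rfl⟩
        rcases hs with ⟨k, hk, rfl⟩ | rfl
        · left
          refine ⟨(a * σ k + b) / d, ⟨σ k, (hσ k).2 hk, ?_⟩, ?_⟩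
          · field_simp
          · rw [hg]; simp [moebius, hd]
        · right; rw [hg]; simp [moebius]
      · rintro (⟨y, ⟨k, hk, rfl⟩, rfl⟩ | h)
        · refine ⟨some (σ.symm k), Or.inl ⟨σ.symm k, hInv σ.symm _ hk, rfl⟩, ?_⟩
          rw [hg]; simp only [moebius]
          rw [if_neg (by simpa using hd)]
          congr 1
          simp only [RingEquiv.apply_symm_apply, mul_zero, zero_mul, zero_add]; field_simp
        · simp only [Set.mem_singleton_iff] at h; subst h
          exact ⟨none, Or.inr rfl, by rw [hg]; simp [moebius]⟩
    · -- c ≠ 0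
      obtain ⟨s, hs, hs0⟩ := hinf
      have hk₀ : ∃ k₀ ∈ K, c * σ k₀ + d = 0 := by
        rcases hs with ⟨k₀, hk₀, rfl⟩ | rfl
        · refine ⟨k₀, hk₀, ?_⟩
          by_contra h
          rw [hg] at hs0; simp [moebius, h] at hs0
        · rw [hg] at hs0; simp [moebius, hc] at hs0
      obtain ⟨k₀, hk₀K, hk₀⟩ := hk₀
      have hdc : d / c ∈ K := by
        have : d / c = -σ k₀ := by field_simp; linear_combination hk₀
        rw [this]; exact K.neg_mem ((hσ k₀).2 hk₀K)
      have he : (b * c - a * d) / c ^ 2 ≠ 0 := by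
        apply div_ne_zero _ (pow_ne_zero 2 hc)
        intro h; exact hdet (by linear_combination -h)
      refine ⟨(b * c - a * d) / c ^ 2, a / c, he, ?_⟩
      ext o
      constructor
      · rintro ⟨s, hs, rfl⟩
        rcases hs with ⟨k, hk, rfl⟩ | rfl
        · by_cases h : c * σ k + d = 0
          · right; rw [hg]; simp [moebius, h]
          · left
            have hne : σ k + d / c ≠ 0 := by
              intro h0
              apply h
              have : c * σ k + d = c * (σ k + d / c) := by field_simp
              rw [this, h0, mul_zero]
            refine ⟨(a * σ k + b) / (c * σ k + d),
              ⟨(σ k + d / c)⁻¹, K.inv_mem (K.add_mem ((hσ k).2 hk) hdc), ?_⟩, ?_⟩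
            · show (σ k + d / c)⁻¹ * ((b * c - a * d) / c ^ 2) + a / c
                = (a * σ k + b) / (c * σ k + d)
              have key : σ k + d / c = (c * σ k + d) / c := by field_simp
              rw [key]
              field_simp
              ring
            · rw [hg]; simp [moebius, h]
        · left
          refine ⟨a / c, ⟨0, K.zero_mem, by simp⟩, ?_⟩
          rw [hg]; simp [moebius, hc]
      · rintro (⟨y, ⟨k', hk', rfl⟩, rfl⟩ | h)
        · by_cases hk'0 : k' = 0
          · refine ⟨none, Or.inr rfl, ?_⟩
            rw [hg]; simp [moebius, hc, hk'0]
          · set w : F := 1 / k' - d / c with hw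
            have hwK : w ∈ K := K.sub_mem (by simpa using K.inv_mem hk') hdc
            have hcw : c * w + d = c / k' := by rw [hw]; field_simp; ring
            have hcw0 : c * w + d ≠ 0 := by rw [hcw]; exact div_ne_zero hc hk'0
            refine ⟨some (σ.symm w), Or.inl ⟨σ.symm w, hInv σ.symm _ hwK, rfl⟩, ?_⟩
            rw [hg]; simp only [moebius, RingEquiv.apply_symm_apply]
            rw [if_neg hcw0]
            congr 1
            rw [hcw, hw]
            field_simp
            ring
        · simp only [Set.mem_singleton_iff] at h; subst h
          refine ⟨some k₀, Or.inl ⟨k₀, hk₀K, rfl⟩, ?_⟩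
          rw [hg]; simp [moebius, hk₀]
  · rintro ⟨a, b, ha, rfl⟩
    refine ⟨⟨Equiv.optionCongr ((Equiv.mulLeft₀ a ha).trans (Equiv.addRight b)),
      ⟨RingEquiv.refl F, a, b, 0, 1, by simpa using ha, ?_⟩, ?_⟩, Or.inr rfl⟩
    · intro x
      cases x with
      | none => simp [moebius]
      | some x => simp [moebius, Equiv.optionCongr]
    · ext o
      constructor
      · rintro (⟨y, ⟨k, hk, rfl⟩, rfl⟩ | h)
        · exact ⟨some k, Or.inl ⟨k, hk, rfl⟩, by simp [Equiv.optionCongr, mul_comm]⟩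
        · simp only [Set.mem_singleton_iff] at h; subst h
          exact ⟨none, Or.inr rfl, by simp [Equiv.optionCongr]⟩
      · rintro ⟨s, hs, rfl⟩
        rcases hs with ⟨k, hk, rfl⟩ | rfl
        · exact Or.inl ⟨a * k + b, ⟨k, hk, by ring⟩, by simp [Equiv.optionCongr]⟩
        · right; simp [Equiv.optionCongr]
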